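/- arXiv:hep-th/9401042 — 3 statements merged into one kernel-verified Lean document; each statement's English description precedes it below -/
import Mathlib

section
/- The quasi Yang–Baxter equation R₁₂φ₃₁₂R₁₃φ₁₃₂⁻¹R₂₃φ = φ₃₂₁R₂₃φ₂₃₁⁻¹R₁₃φ₂₁₃R₁₂ holds in any quasi-triangular weak quasi-bialgebra. -/
open TensorProduct

noncomputable section

variable {A : Type*} [Ring A] [Algebra ℂ A]

/-- `Δ ⊗ id : A ⊗ A → A ⊗ (A ⊗ A)` (re-associated). -/
def coDid (Δ : A →ₗ[ℂ] A ⊗[ℂ] A) : A ⊗[ℂ] A →ₗ[ℂ] A ⊗[ℂ] (A ⊗[ℂ] A) :=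
  (TensorProduct.assoc ℂ A A A).toLinearMap ∘ₗ TensorProduct.map Δ LinearMap.id

/-- `id ⊗ Δ : A ⊗ A → A ⊗ (A ⊗ A)`. -/
def coidD (Δ : A →ₗ[ℂ] A ⊗[ℂ] A) : A ⊗[ℂ] A →ₗ[ℂ] A ⊗[ℂ] (A ⊗[ℂ] A) :=
  TensorProduct.map LinearMap.id Δ

/-- `id ⊗ id ⊗ Δ` on three tensor factors. -/
def coddD (Δ : A →ₗ[ℂ] A ⊗[ℂ] A) :
    A ⊗[ℂ] (A ⊗[ℂ] A) →ₗ[ℂ] A ⊗[ℂ] (A ⊗[ℂ] (A ⊗[ℂ] A)) :=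
  TensorProduct.map LinearMap.id (TensorProduct.map LinearMap.id Δ)

/-- `Δ ⊗ id ⊗ id` on three tensor factors (re-associated). -/
def coDdd (Δ : A →ₗ[ℂ] A ⊗[ℂ] A) :
    A ⊗[ℂ] (A ⊗[ℂ] A) →ₗ[ℂ] A ⊗[ℂ] (A ⊗[ℂ] (A ⊗[ℂ] A)) :=
  (TensorProduct.assoc ℂ A A (A ⊗[ℂ] A)).toLinearMap ∘ₗ
    TensorProduct.map Δ LinearMap.id

/-- `id ⊗ Δ ⊗ id` on three tensor factors (re-associated). -/
def codDd (Δ : A →ₗ[ℂ] A ⊗[ℂ] A) :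
    A ⊗[ℂ] (A ⊗[ℂ] A) →ₗ[ℂ] A ⊗[ℂ] (A ⊗[ℂ] (A ⊗[ℂ] A)) :=
  TensorProduct.map LinearMap.id
    ((TensorProduct.assoc ℂ A A A).toLinearMap ∘ₗ TensorProduct.map Δ LinearMap.id)

/-- `x ⊗ y ⊗ z ↦ x ⊗ y ⊗ z ⊗ e`: the embedding realizing `φ ⊗ e`. -/
def padRight3 : A ⊗[ℂ] (A ⊗[ℂ] A) →ₗ[ℂ] A ⊗[ℂ] (A ⊗[ℂ] (A ⊗[ℂ] A)) :=
  TensorProduct.map LinearMap.id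
    (TensorProduct.map LinearMap.id ((TensorProduct.mk ℂ A A).flip 1))

/-- Transposition of the first two of three tensor factors. -/
def perm12 : A ⊗[ℂ] (A ⊗[ℂ] A) →ₗ[ℂ] A ⊗[ℂ] (A ⊗[ℂ] A) :=
  (TensorProduct.assoc ℂ A A A).toLinearMap ∘ₗ
    TensorProduct.map (TensorProduct.comm ℂ A A).toLinearMap LinearMap.id ∘ₗ
    (TensorProduct.assoc ℂ A A A).symm.toLinearMap

/-- Transposition of the last two of three tensor factors. -/
def perm23 : A ⊗[ℂ] (A ⊗[ℂ] A) →ₗ[ℂ] A ⊗[ℂ] (A ⊗[ℂ] A) :=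
  TensorProduct.map LinearMap.id (TensorProduct.comm ℂ A A).toLinearMap

/-- `R ↦ R₁₂ = Σ r¹ ⊗ r² ⊗ e`. -/
def emb12 : A ⊗[ℂ] A →ₗ[ℂ] A ⊗[ℂ] (A ⊗[ℂ] A) :=
  TensorProduct.map LinearMap.id ((TensorProduct.mk ℂ A A).flip 1)

/-- `R ↦ R₁₃ = Σ r¹ ⊗ e ⊗ r²`. -/
def emb13 : A ⊗[ℂ] A →ₗ[ℂ] A ⊗[ℂ] (A ⊗[ℂ] A) :=
  TensorProduct.map LinearMap.id ((TensorProduct.mk ℂ A A) 1)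



section Aux

/-- `t ↦ assoc (t ⊗ y)`: embed `A ⊗ A` into the first two factors with `y` in the third. -/
def shiftUp (y : A) : A ⊗[ℂ] A →ₗ[ℂ] A ⊗[ℂ] (A ⊗[ℂ] A) :=
  (TensorProduct.assoc ℂ A A A).toLinearMap ∘ₗ
    (TensorProduct.mk ℂ (A ⊗[ℂ] A) A).flip y

lemma shiftUp_tmul (y a b : A) :
    shiftUp y (a ⊗ₜ[ℂ] b) = a ⊗ₜ[ℂ] (b ⊗ₜ[ℂ] y) := by
  simp [shiftUp]

lemma perm12_tmul (a b c : A) :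
    perm12 (a ⊗ₜ[ℂ] (b ⊗ₜ[ℂ] c)) = b ⊗ₜ[ℂ] (a ⊗ₜ[ℂ] c) := by
  simp [perm12]

lemma emb12_tmul (a b : A) :
    emb12 (a ⊗ₜ[ℂ] b) = a ⊗ₜ[ℂ] (b ⊗ₜ[ℂ] (1 : A)) := by
  simp [emb12]

lemma emb13_tmul (a b : A) :
    emb13 (a ⊗ₜ[ℂ] b) = a ⊗ₜ[ℂ] ((1 : A) ⊗ₜ[ℂ] b) := by
  simp [emb13]

lemma coDid_tmul (Δ : A →ₗ[ℂ] A ⊗[ℂ] A) (x y : A) :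
    coDid Δ (x ⊗ₜ[ℂ] y) = shiftUp y (Δ x) := by
  simp [coDid, shiftUp]

lemma perm12_mul (a b : A ⊗[ℂ] (A ⊗[ℂ] A)) :
    perm12 (a * b) = perm12 a * perm12 b := by
  induction a using TensorProduct.induction_on with
  | zero => simp
  | add x y hx hy => simp [add_mul, hx, hy]
  | tmul a a' =>
    induction a' using TensorProduct.induction_on with
    | zero => simp
    | add x y hx hy =>
      simp only [TensorProduct.tmul_add, add_mul, map_add, hx, hy]
    | tmul a1 a2 =>
      induction b using TensorProduct.induction_on with
      | zero => simp
      | add x y hx hy => simp [mul_add, hx, hy]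
      | tmul b b' =>
        induction b' using TensorProduct.induction_on with
        | zero => simp
        | add x y hx hy =>
          simp only [TensorProduct.tmul_add, mul_add, map_add, hx, hy]
        | tmul b1 b2 =>
          simp [Algebra.TensorProduct.tmul_mul_tmul, perm12_tmul]

lemma emb12_mul_shiftUp (S u : A ⊗[ℂ] A) (y : A) :
    emb12 S * shiftUp y u = shiftUp y (S * u) := by
  induction S using TensorProduct.induction_on with
  | zero => simp
  | add x z hx hz => simp [add_mul, hx, hz]
  | tmul a b =>
    induction u using TensorProduct.induction_on with
    | zero => simp
    | add x z hx hz => simp [mul_add, hx, hz]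
    | tmul c d =>
      simp [emb12_tmul, shiftUp_tmul, Algebra.TensorProduct.tmul_mul_tmul]

lemma perm12_shiftUp_mul_emb12 (S u : A ⊗[ℂ] A) (y : A) :
    perm12 (shiftUp y u) * emb12 S = shiftUp y ((TensorProduct.comm ℂ A A) u * S) := by
  induction S using TensorProduct.induction_on with
  | zero => simp
  | add x z hx hz => simp [mul_add, hx, hz]
  | tmul a b =>
    induction u using TensorProduct.induction_on with
    | zero => simp
    | add x z hx hz => simp [add_mul, hx, hz]
    | tmul c d =>
      simp [emb12_tmul, shiftUp_tmul, perm12_tmul,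
        Algebra.TensorProduct.tmul_mul_tmul]

lemma perm12_emb13 (S : A ⊗[ℂ] A) :
    perm12 (emb13 S) = (1 : A) ⊗ₜ[ℂ] S := by
  induction S using TensorProduct.induction_on with
  | zero => simp
  | add x z hx hz => simp [TensorProduct.tmul_add, hx, hz]
  | tmul a b => simp [emb13_tmul, perm12_tmul]

lemma perm12_one_tmul (S : A ⊗[ℂ] A) :
    perm12 ((1 : A) ⊗ₜ[ℂ] S) = emb13 S := by
  induction S using TensorProduct.induction_on with
  | zero => simp
  | add x z hx hz => simp [TensorProduct.tmul_add, hx, hz]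
  | tmul a b => simp [emb13_tmul, perm12_tmul]

lemma emb12_mul_coDid (Δ : A →ₗ[ℂ] A ⊗[ℂ] A) (R : A ⊗[ℂ] A)
    (hRint : ∀ ξ : A, R * Δ ξ = (TensorProduct.comm ℂ A A) (Δ ξ) * R)
    (T : A ⊗[ℂ] A) :
    emb12 R * coDid Δ T = perm12 (coDid Δ T) * emb12 R := by
  induction T using TensorProduct.induction_on with
  | zero => simp
  | add x z hx hz => simp only [map_add, mul_add, add_mul, hx, hz]
  | tmul x y =>
    rw [coDid_tmul, emb12_mul_shiftUp, perm12_shiftUp_mul_emb12, hRint]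

end Aux

/-- The quasi Yang–Baxter equation
`R₁₂ φ₃₁₂ R₁₃ φ₁₃₂⁻¹ R₂₃ φ = φ₃₂₁ R₂₃ φ₂₃₁⁻¹ R₁₃ φ₂₁₃ R₁₂`
holds in any quasi-triangular weak quasi-bialgebra.  Here
`φ₂₁₃ = P₁₂φ`, `φ₁₃₂⁻¹ = P₂₃φ⁻¹`, `φ₃₁₂ = P₂₃P₁₂φ`, `φ₂₃₁⁻¹ = P₁₂P₂₃φ⁻¹`,
`φ₃₂₁ = P₁₂P₂₃P₁₂φ`, and `R₂₃ = e ⊗ R`. -/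
theorem quasi_yang_baxter_equation
    (Δ : A →ₗ[ℂ] A ⊗[ℂ] A)
    (hΔ : ∀ x y : A, Δ (x * y) = Δ x * Δ y)
    (ε : A →ₐ[ℂ] ℂ)
    (hεl : ∀ ξ : A,
      (TensorProduct.lid ℂ A) ((TensorProduct.map ε.toLinearMap LinearMap.id) (Δ ξ)) = ξ)
    (hεr : ∀ ξ : A,
      (TensorProduct.rid ℂ A) ((TensorProduct.map LinearMap.id ε.toLinearMap) (Δ ξ)) = ξ)
    (φ φinv : A ⊗[ℂ] (A ⊗[ℂ] A))
    (hqi1 : φ * φinv = coidD Δ (Δ 1))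
    (hqi2 : φinv * φ = coDid Δ (Δ 1))
    (hφint : ∀ ξ : A, φ * coDid Δ (Δ ξ) = coidD Δ (Δ ξ) * φ)
    (hpent : coddD Δ φ * coDdd Δ φ =
      ((1 : A) ⊗ₜ[ℂ] φ) * codDd Δ φ * padRight3 φ)
    (hmid : TensorProduct.map LinearMap.id
        ((TensorProduct.lid ℂ A).toLinearMap ∘ₗ
          TensorProduct.map ε.toLinearMap LinearMap.id) φ = Δ 1)
    (R Rinv : A ⊗[ℂ] A)
    (hR1 : R * Rinv = (TensorProduct.comm ℂ A A) (Δ 1))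
    (hR2 : Rinv * R = Δ 1)
    (hRint : ∀ ξ : A, R * Δ ξ = (TensorProduct.comm ℂ A A) (Δ ξ) * R)
    (hhex1 : coidD Δ R =
      perm12 (perm23 φinv) * emb13 R * perm12 φ * emb12 R * φinv)
    (hhex2 : coDid Δ R =
      perm23 (perm12 φ) * emb13 R * perm23 φinv * ((1 : A) ⊗ₜ[ℂ] R) * φ) :
    emb12 R * perm23 (perm12 φ) * emb13 R * perm23 φinv * ((1 : A) ⊗ₜ[ℂ] R) * φ =
      perm12 (perm23 (perm12 φ)) * ((1 : A) ⊗ₜ[ℂ] R) * perm12 (perm23 φinv) *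
        emb13 R * perm12 φ * emb12 R := by
  have h1 : emb12 R * perm23 (perm12 φ) * emb13 R * perm23 φinv * ((1 : A) ⊗ₜ[ℂ] R) * φ
      = emb12 R * coDid Δ R := by
    rw [hhex2]; simp only [mul_assoc]
  rw [h1, emb12_mul_coDid Δ R hRint, hhex2]
  simp only [perm12_mul, perm12_emb13, perm12_one_tmul, mul_assoc]
end
end

section
/- The operators σᵢ = ρ^{i-1}(ε(ρ,ρ)) built from the statistics operator of a localized transportable endomorphism ρ satisfy the Artin braid relations: σᵢσₖ = σₖσᵢ for |i-k| ≥ 2 and σᵢσᵢ₊₁σᵢ = σᵢ₊₁σᵢσᵢ₊₁. -/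
/-- The operators `σᵢ = ρ^{i-1}(ε(ρ,ρ))` built from the
statistics operator `u = ε(ρ,ρ)` of a localized transportable endomorphism `ρ`
of the C*-algebra `A` of observables satisfy the Artin braid relations:
`σᵢσₖ = σₖσᵢ` for `|i-k| ≥ 2` and `σᵢσᵢ₊₁σᵢ = σᵢ₊₁σᵢσᵢ₊₁`.
Here we index from `0`, so `σ i := ρ^[i] u`.  The hypotheses are the
statistics-operator identities (epsprop): `u` is unitary, it intertwines
`ρ∘ρ` with itself (localized transportable endomorphisms at spacelike
distance commute), and the Yang–Baxter relation
`ε(ρ,ρ)ρ(ε(ρ,ρ))ε(ρ,ρ) = ρ(ε(ρ,ρ))ε(ρ,ρ)ρ(ε(ρ,ρ))` (which follows from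
`ε(ρ∘ρ,ρ) = ε(ρ,ρ)ρ(ε(ρ,ρ))` and `ε(ρ,ρ∘ρ) = ρ(ε(ρ,ρ))ε(ρ,ρ)`). -/
theorem statistics_operators_satisfy_artin_relations
    {A : Type*} [Ring A] [StarRing A]
    (ρ : A →+* A) (u : A)
    (huni : u * star u = 1 ∧ star u * u = 1)
    (hint : ∀ a : A, u * ρ (ρ a) = ρ (ρ a) * u)
    (hybe : u * ρ u * u = ρ u * u * ρ u) :
    (∀ i k : ℕ, i + 2 ≤ k →
      (⇑ρ)^[i] u * (⇑ρ)^[k] u = (⇑ρ)^[k] u * (⇑ρ)^[i] u) ∧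
    (∀ i : ℕ,
      (⇑ρ)^[i] u * (⇑ρ)^[i+1] u * (⇑ρ)^[i] u
        = (⇑ρ)^[i+1] u * (⇑ρ)^[i] u * (⇑ρ)^[i+1] u) := by
  constructor
  · intro i k hk
    obtain ⟨j, rfl⟩ : ∃ j, k = i + 2 + j := ⟨k - (i+2), by omega⟩
    have h : u * (⇑ρ)^[2+j] u = (⇑ρ)^[2+j] u * u := by
      rw [Function.iterate_add_apply]
      exact hint _
    have : (⇑ρ)^[i] (u * (⇑ρ)^[2+j] u) = (⇑ρ)^[i] ((⇑ρ)^[2+j] u * u) := by rw [h]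
    simpa [show i + 2 + j = i + (2 + j) by omega, Function.iterate_add_apply,
      map_mul] using this
  · intro i
    have : (⇑ρ)^[i] (u * ρ u * u) = (⇑ρ)^[i] (ρ u * u * ρ u) := by rw [hybe]
    simpa [Function.iterate_succ_apply, map_mul] using this
end

section
/- If the Clebsch–Gordan maps Cᵃ(IJ|K): Vᴵ⊗Vᴶ → Vᴷ satisfy the orthonormality Cᵃ(IJ|K)Cᵇ(IJ|L)* = δ_{K,L}δ_{a,b}e_K, then the coproduct Δ(ξ) = Σ Cᵃ(IJ|K)* ξ Cᵃ(IJ|K) is an algebra homomorphism: Δ(ξη) = Δ(ξ)Δ(η). -/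
open TensorProduct

/-- If the Clebsch–Gordan maps `Cᵃ(IJ|K) : Vᴵ⊗Vᴶ → Vᴷ`
(together with their adjoints `D = C*`) satisfy the orthonormality
`Cᵃ(IJ|K)Cᵇ(IJ|L)* = δ_{K,L}δ_{a,b}e_K`, then the coproduct
`Δ(ξ) = Σ Cᵃ(IJ|K)* ξ Cᵃ(IJ|K)` (whose component on `Vᴵ ⊗ Vᴶ` is
`Σ_{K,a} D ∘ ξ_K ∘ C`) is an algebra homomorphism: `Δ(ξη) = Δ(ξ)Δ(η)`.
Here `G*` is the algebra `Π I, End(Vᴵ)` of grade-preserving maps of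
`V = ⊕ Vᴵ`. -/
theorem clebsch_gordan_coproduct_is_homomorphism
    {ι : Type*} [Fintype ι] [DecidableEq ι]
    (V : ι → Type*) [∀ i, AddCommGroup (V i)] [∀ i, Module ℂ (V i)]
    (N : ι → ι → ι → ℕ)
    (C : ∀ I J K : ι, Fin (N I J K) → (V I ⊗[ℂ] V J →ₗ[ℂ] V K))
    (D : ∀ I J K : ι, Fin (N I J K) → (V K →ₗ[ℂ] V I ⊗[ℂ] V J))
    (h1 : ∀ (I J K : ι) (a b : Fin (N I J K)),
      C I J K a ∘ₗ D I J K b = if a = b then LinearMap.id else 0)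
    (h2 : ∀ (I J K L : ι) (a : Fin (N I J K)) (b : Fin (N I J L)),
      K ≠ L → C I J K a ∘ₗ D I J L b = 0) :
    ∀ (ξ η : ∀ i, Module.End ℂ (V i)) (I J : ι),
      (∑ K, ∑ a, D I J K a ∘ₗ (ξ K * η K) ∘ₗ C I J K a) =
        (∑ K, ∑ a, D I J K a ∘ₗ ξ K ∘ₗ C I J K a) *
        (∑ K, ∑ a, D I J K a ∘ₗ η K ∘ₗ C I J K a) := by
  intro ξ η I J
  rw [Finset.sum_mul]
  refine Finset.sum_congr rfl fun K _ => ?_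
  rw [Finset.sum_mul]
  refine Finset.sum_congr rfl fun a _ => ?_
  rw [Finset.mul_sum]
  rw [Finset.sum_eq_single K]
  · rw [Finset.mul_sum, Finset.sum_eq_single a]
    · have := h1 I J K a a
      simp only [if_pos rfl] at this
      show _ = (D I J K a ∘ₗ ξ K ∘ₗ C I J K a) ∘ₗ (D I J K a ∘ₗ η K ∘ₗ C I J K a)
      calc D I J K a ∘ₗ (ξ K * η K) ∘ₗ C I J K a
          = D I J K a ∘ₗ (ξ K ∘ₗ (C I J K a ∘ₗ D I J K a) ∘ₗ η K) ∘ₗ C I J K a := by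
            rw [this]; rfl
        _ = _ := by ext x; simp [LinearMap.comp_apply]
    · intro b _ hb
      have hab : a ≠ b := fun h => hb h.symm
      have : (D I J K a ∘ₗ ξ K ∘ₗ C I J K a) ∘ₗ (D I J K b ∘ₗ η K ∘ₗ C I J K b)
          = D I J K a ∘ₗ ξ K ∘ₗ (C I J K a ∘ₗ D I J K b) ∘ₗ η K ∘ₗ C I J K b := by
        ext x; simp [LinearMap.comp_apply]
      show (D I J K a ∘ₗ ξ K ∘ₗ C I J K a) ∘ₗ _ = 0
      rw [this, h1 I J K a b, if_neg hab]
      ext x; simp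
    · simp
  · intro L _ hL
    rw [Finset.mul_sum]
    refine Finset.sum_eq_zero fun b _ => ?_
    have hz := h2 I J K L a b hL.symm
    show (D I J K a ∘ₗ ξ K ∘ₗ C I J K a) ∘ₗ (D I J L b ∘ₗ η L ∘ₗ C I J L b) = 0
    have : (D I J K a ∘ₗ ξ K ∘ₗ C I J K a) ∘ₗ (D I J L b ∘ₗ η L ∘ₗ C I J L b)
        = D I J K a ∘ₗ ξ K ∘ₗ (C I J K a ∘ₗ D I J L b) ∘ₗ η L ∘ₗ C I J L b := by
      ext x; simp [LinearMap.comp_apply]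
    rw [this, hz]; ext x; simp
  · simp
end
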